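/- Let B be a commutative unital C*-algebra and E a Hilbert C*-module over B. If b ∈ B satisfies 0 ≤ b ≤ 1, and ψ₁, ψ₂ ∈ E satisfy ‖ψ₁‖ ≤ 1 and ‖ψ₂‖ ≤ 1, then ‖ψ₁ • b + ψ₂ • (1 − b)‖ ≤ 1. -/

import Mathlib

open scoped RightActions

/-- The December 2024 Mathlib `CStarModule` (right Hilbert C*-module, action of `Aᵐᵒᵖ`),
restored under a new name since Mathlib's `CStarModule` now means a left module. -/
class RightCStarModule (A E : Type*) [NonUnitalSemiring A] [StarRing A] [Module ℂ A]
    [AddCommGroup E] [Module ℂ E] [PartialOrder A] [SMul Aᵐᵒᵖ E] [Norm A] [Norm E]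
    extends Inner A E where
  inner_add_right {x} {y} {z} : inner x (y + z) = inner x y + inner x z
  inner_self_nonneg {x} : 0 ≤ inner x x
  inner_self {x} : inner x x = 0 ↔ x = 0
  inner_op_smul_right {a : A} {x y : E} : inner x (y <• a) = inner x y * a
  inner_smul_right_complex {z : ℂ} {x} {y} : inner x (z • y) = z • inner x y
  star_inner x y : star (inner x y) = inner y x
  norm_eq_sqrt_norm_inner_self x : ‖x‖ = √‖inner x x‖

namespace RightCStarModule

variable {A E : Type*} [NonUnitalNormedRing A] [StarRing A] [NormedSpace ℂ A]
    [AddCommGroup E] [Module ℂ E] [PartialOrder A] [SMul Aᵐᵒᵖ E] [Norm E]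
    [RightCStarModule A E]

lemma norm_nonneg {A E : Type*} [NonUnitalNormedRing A] [StarRing A] [NormedSpace ℂ A]
    [AddCommGroup E] [Module ℂ E] [PartialOrder A] [SMul Aᵐᵒᵖ E] [Norm E]
    [RightCStarModule A E] {x : E} : 0 ≤ ‖x‖ := by
  rw [norm_eq_sqrt_norm_inner_self (A := A) x]; exact Real.sqrt_nonneg _

lemma norm_sq_eq {x : E} : ‖x‖ ^ 2 = ‖inner A x x‖ := by
  rw [norm_eq_sqrt_norm_inner_self (A := A) x, Real.sq_sqrt (_root_.norm_nonneg _)]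

lemma inner_add_left {x y z : E} : inner A (x + y) z = inner A x z + inner A y z := by
  rw [← star_inner, inner_add_right, star_add, star_inner, star_inner]

lemma inner_op_smul_left {a : A} {x y : E} : inner A (x <• a) y = star a * inner A x y := by
  rw [← star_inner, inner_op_smul_right, star_mul, star_inner]

lemma inner_neg_right {x y : E} : inner A x (-y) = -inner A x y := by
  have h := inner_smul_right_complex (A := A) (z := (-1 : ℂ)) (x := x) (y := y)
  rwa [neg_one_smul, neg_one_smul] at h

lemma inner_sub_right {x y z : E} : inner A x (y - z) = inner A x y - inner A x z := by
  rw [sub_eq_add_neg, inner_add_right, inner_neg_right, ← sub_eq_add_neg]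

lemma inner_sub_left {x y z : E} : inner A (x - y) z = inner A x z - inner A y z := by
  rw [← star_inner, inner_sub_right, star_sub, star_inner, star_inner]

end RightCStarModule

/-- **Local convexity of Hilbert C*-modules.**
Let `B` be a commutative unital C*-algebra and `E` a Hilbert C*-module over `B`.
If `b ∈ B` satisfies `0 ≤ b ≤ 1`, and `ψ₁, ψ₂ ∈ E` have norm at most one, then
`‖ψ₁ • b + ψ₂ • (1 - b)‖ ≤ 1`. -/
theorem cstarModule_convex_combination {B E : Type*} [CommCStarAlgebra B]
    [PartialOrder B] [StarOrderedRing B]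
    [AddCommGroup E] [Module ℂ E] [SMul Bᵐᵒᵖ E] [Norm E] [RightCStarModule B E]
    (b : B) (hb0 : 0 ≤ b) (hb1 : b ≤ 1)
    (ψ₁ ψ₂ : E) (hψ₁ : ‖ψ₁‖ ≤ 1) (hψ₂ : ‖ψ₂‖ ≤ 1) :
    ‖ψ₁ <• b + ψ₂ <• (1 - b)‖ ≤ 1 := by
  set c : B := 1 - b with hc
  have hc0 : 0 ≤ c := by simpa [hc] using sub_nonneg.mpr hb1
  set x : E := ψ₁ <• b + ψ₂ <• c with hx
  -- inner products of ψᵢ are ≤ 1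
  have hinner₁ : (inner B ψ₁ ψ₁ : B) ≤ 1 := by
    rw [← CStarAlgebra.norm_le_one_iff_of_nonneg _ RightCStarModule.inner_self_nonneg,
      ← RightCStarModule.norm_sq_eq]
    nlinarith [RightCStarModule.norm_nonneg (A := B) (x := ψ₁)]
  have hinner₂ : (inner B ψ₂ ψ₂ : B) ≤ 1 := by
    rw [← CStarAlgebra.norm_le_one_iff_of_nonneg _ RightCStarModule.inner_self_nonneg,
      ← RightCStarModule.norm_sq_eq]
    nlinarith [RightCStarModule.norm_nonneg (A := B) (x := ψ₂)]
  have hcross : (inner B ψ₁ ψ₂ : B) + inner B ψ₂ ψ₁ ≤ inner B ψ₁ ψ₁ + inner B ψ₂ ψ₂ := by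
    have h := RightCStarModule.inner_self_nonneg (A := B) (x := ψ₁ - ψ₂)
    simp only [RightCStarModule.inner_sub_left, RightCStarModule.inner_sub_right] at h
    rw [← sub_nonneg]
    convert h using 1
    abel
  have hbsa : star b = b := (IsSelfAdjoint.of_nonneg hb0).star_eq
  have hcsa : star c = c := (IsSelfAdjoint.of_nonneg hc0).star_eq
  -- expand the inner product
  have hexp : (inner B x x : B)
      = b * b * inner B ψ₁ ψ₁ + b * c * (inner B ψ₁ ψ₂ + inner B ψ₂ ψ₁) + c * c * inner B ψ₂ ψ₂ := by
    simp only [hx, RightCStarModule.inner_add_left, RightCStarModule.inner_add_right,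
      RightCStarModule.inner_op_smul_left, RightCStarModule.inner_op_smul_right, hbsa, hcsa]
    ring
  letI : IsOrderedRing B := StarOrderedRing.toIsOrderedRing B
  have hle : (inner B x x : B) ≤ 1 := by
    calc (inner B x x : B)
        = b * b * inner B ψ₁ ψ₁ + b * c * (inner B ψ₁ ψ₂ + inner B ψ₂ ψ₁) + c * c * inner B ψ₂ ψ₂ :=
          hexp
      _ ≤ b * b * 1 + b * c * (inner B ψ₁ ψ₁ + inner B ψ₂ ψ₂) + c * c * 1 := by
          gcongr <;> first
            | exact mul_nonneg hb0 hb0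
            | exact mul_nonneg hb0 hc0
            | exact mul_nonneg hc0 hc0
            | assumption
      _ ≤ b * b * 1 + b * c * (1 + 1) + c * c * 1 := by
          gcongr <;> first
            | exact mul_nonneg hb0 hc0
            | exact add_le_add hinner₁ hinner₂
      _ = (b + c) * (b + c) := by ring
      _ = 1 := by rw [hc]; ring
  -- conclude with norms
  have hxnorm : ‖(inner B x x : B)‖ ≤ 1 :=
    (CStarAlgebra.norm_le_one_iff_of_nonneg _ RightCStarModule.inner_self_nonneg).mpr hle
  rw [RightCStarModule.norm_eq_sqrt_norm_inner_self (A := B)]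
  calc Real.sqrt ‖(inner B x x : B)‖ ≤ Real.sqrt 1 := Real.sqrt_le_sqrt hxnorm
    _ = 1 := Real.sqrt_one
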